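/- The double ray (the two-way infinite path) has small automorphisms: the shift by one is a small automorphism, and there exists an edge colouring with 2 colours of the double ray that breaks every small automorphism. -/

import Mathlib

open SimpleGraph

/-- An edge colouring `c` preserves an automorphism `φ` if every edge is mapped
to an edge of the same colour. -/
def Preserves {V C : Type*} (G : SimpleGraph V) (c : Sym2 V → C) (φ : G ≃g G) : Prop :=
  ∀ u v : V, G.Adj u v → c s(φ u, φ v) = c s(u, v)

/-- An edge colouring `c` breaks an automorphism `φ` if it does not preserve it. -/
def Breaks {V C : Type*} (G : SimpleGraph V) (c : Sym2 V → C) (φ : G ≃g G) : Prop :=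
  ¬ Preserves G c φ

/-- An automorphism is small if it moves some vertex to a neighbour. -/
def IsSmall {V : Type*} (G : SimpleGraph V) (φ : G ≃g G) : Prop :=
  ∃ v : V, G.Adj v (φ v)

/-- The double ray: the two-way infinite path on `ℤ`. -/
def doubleRay : SimpleGraph ℤ :=
  SimpleGraph.fromRel (fun i j => j = i + 1)

lemma drAdj (i j : ℤ) : doubleRay.Adj i j ↔ (j = i + 1 ∨ i = j + 1) := by
  simp only [doubleRay, SimpleGraph.fromRel_adj]
  omega

/-- The shift automorphism. -/
def shiftIso : doubleRay ≃g doubleRay where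
  toEquiv := Equiv.addRight 1
  map_rel_iff' := by
    intro a b
    simp only [Equiv.coe_addRight, drAdj]
    omega

/-- Pattern function: colour of the edge `{i, i+1}`. -/
def gpat : ℤ → Fin 2 := fun i => if i = 0 ∨ i = 1 ∨ i = 3 then 1 else 0

/-- The breaking colouring. -/
def col : Sym2 ℤ → Fin 2 :=
  Sym2.lift ⟨fun a b => gpat (min a b), fun a b => by
    show gpat (min a b) = gpat (min b a)
    rw [min_comm]⟩

lemma col_eval (a b : ℤ) : col s(a, b) = gpat (min a b) := rfl

lemma gpat_zero {x : ℤ} (h0 : x ≠ 0) (h1 : x ≠ 1) (h3 : x ≠ 3) : gpat x = 0 := by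
  unfold gpat
  rw [if_neg]
  tauto

lemma gpat_one {x : ℤ} (h : x = 0 ∨ x = 1 ∨ x = 3) : gpat x = 1 := by
  unfold gpat
  rw [if_pos h]

/-- Every automorphism of the double ray is affine: `φ i = φ 0 + ε * i` with `ε = ±1`. -/
lemma dr_form (φ : doubleRay ≃g doubleRay) :
    ∃ ε : ℤ, (ε = 1 ∨ ε = -1) ∧ ∀ i : ℤ, φ i = φ 0 + ε * i := by
  have step : ∀ i : ℤ, φ (i + 1) = φ i + 1 ∨ φ (i + 1) = φ i - 1 := by
    intro i
    have h : doubleRay.Adj (φ i) (φ (i + 1)) :=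
      φ.map_adj_iff.mpr ((drAdj i (i + 1)).mpr (Or.inl rfl))
    have := (drAdj _ _).mp h
    omega
  -- differences are locally constant
  have nback : ∀ i : ℤ, φ (i + 1) - φ i = φ (i + 2) - φ (i + 1) := by
    intro i
    have e1 : φ (i + 2) = φ (i + 1 + 1) := by congr 1 <;> ring
    rcases step i with h1 | h1 <;> rcases step (i + 1) with h2 | h2
    · omega
    · exfalso
      have : φ (i + 1 + 1) = φ i := by omega
      have := φ.toEquiv.injective this
      omega
    · exfalso
      have : φ (i + 1 + 1) = φ i := by omega
      have := φ.toEquiv.injective this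
      omega
    · omega
  set ε : ℤ := φ 1 - φ 0 with hε
  have hD : ∀ i : ℤ, φ (i + 1) - φ i = ε := by
    intro i
    induction i using Int.induction_on with
    | zero => simp [hε]
    | succ k ih =>
      have h := nback k
      have e1 : φ ((k : ℤ) + 2) = φ ((k : ℤ) + 1 + 1) := by congr 1 <;> ring
      omega
    | pred k ih =>
      have h := nback (-(k : ℤ) - 1)
      have e1 : φ (-(k : ℤ) - 1 + 1) = φ (-(k : ℤ)) := by congr 1 <;> ring
      have e2 : φ (-(k : ℤ) - 1 + 2) = φ (-(k : ℤ) + 1) := by congr 1 <;> ring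
      omega
  have hεval : ε = 1 ∨ ε = -1 := by
    have := step 0
    simp only [zero_add] at this
    omega
  refine ⟨ε, hεval, ?_⟩
  intro i
  induction i using Int.induction_on with
  | zero => ring
  | succ k ih =>
    have h := hD k
    have : φ ((k : ℤ) + 1) = φ k + ε := by omega
    rw [this, ih]; ring
  | pred k ih =>
    have h := hD (-(k : ℤ) - 1)
    have e1 : φ (-(k : ℤ) - 1 + 1) = φ (-(k : ℤ)) := by congr 1 <;> ring
    have : φ (-(k : ℤ) - 1) = φ (-(k : ℤ)) - ε := by omega
    rw [this, ih]; ring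

/-- The shift by one is a small automorphism of the double ray, and there is an
edge colouring of the double ray with two colours breaking every small
automorphism. -/
theorem doubleRay_small_shift_and_colouring :
    (∃ φ : doubleRay ≃g doubleRay, (∀ i : ℤ, φ i = i + 1) ∧ IsSmall doubleRay φ) ∧
    (∃ c : Sym2 ℤ → Fin 2, ∀ φ : doubleRay ≃g doubleRay,
      IsSmall doubleRay φ → Breaks doubleRay c φ) := by
  constructor
  · refine ⟨shiftIso, fun i => rfl, 0, ?_⟩
    exact (drAdj 0 (shiftIso 0)).mpr (Or.inl rfl)
  · refine ⟨col, ?_⟩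
    intro φ hsmall hP
    obtain ⟨ε, hεval, hform⟩ := dr_form φ
    obtain ⟨v, hv⟩ := hsmall
    set t : ℤ := φ 0 with ht
    have hv' := (drAdj _ _).mp hv
    rw [hform v] at hv'
    rcases hεval with hε | hε
    · -- φ i = t + i, small ⇒ t = 1 or t = -1
      subst hε
      have hcases : t = 1 ∨ t = -1 := by omega
      rcases hcases with h1 | h1
      · have h := hP 1 2 ((drAdj 1 2).mpr (Or.inl rfl))
        rw [hform 1, hform 2, col_eval, col_eval] at h
        rw [show min (t + 1 * 1) (t + 1 * 2) = 2 by omega,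
            show min (1 : ℤ) 2 = 1 by omega] at h
        rw [gpat_zero (by norm_num) (by norm_num) (by norm_num),
            gpat_one (by norm_num)] at h
        exact absurd h (by decide)
      · have h := hP 0 1 ((drAdj 0 1).mpr (Or.inl rfl))
        rw [hform 0, hform 1, col_eval, col_eval] at h
        rw [show min (t + 1 * 0) (t + 1 * 1) = -1 by omega,
            show min (0 : ℤ) 1 = 0 by omega] at h
        rw [gpat_zero (by norm_num) (by norm_num) (by norm_num),
            gpat_one (by norm_num)] at h
        exact absurd h (by decide)
    · -- φ i = t - i, small ⇒ t odd
      subst hε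
      have hodd : t = 2 * v + 1 ∨ t = 2 * v - 1 := by omega
      by_cases h1 : t = 1
      · have h := hP 1 2 ((drAdj 1 2).mpr (Or.inl rfl))
        rw [hform 1, hform 2, col_eval, col_eval] at h
        rw [show min (t + -1 * 1) (t + -1 * 2) = -1 by omega,
            show min (1 : ℤ) 2 = 1 by omega] at h
        rw [gpat_zero (by norm_num) (by norm_num) (by norm_num),
            gpat_one (by norm_num)] at h
        exact absurd h (by decide)
      · have h := hP 0 1 ((drAdj 0 1).mpr (Or.inl rfl))
        rw [hform 0, hform 1, col_eval, col_eval] at h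
        rw [show min (t + -1 * 0) (t + -1 * 1) = t - 1 by omega,
            show min (0 : ℤ) 1 = 0 by omega] at h
        rw [gpat_zero (by omega) (by omega) (by omega), gpat_one (by norm_num)] at h
        exact absurd h (by decide)
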